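/- Let n ≥ 0 be an integer and let f(x) = x^{2n}. Then there exists a polynomial r ∈ ℂ[z] of degree at most n−1 such that for all x ∈ ℂ with x ≠ 0, (1/(4x))·(−(x−1)²f(x+1) + (x+1)²f(x−1)) = (1−n)·x^{2n} + r(x²). In particular the operator ½(M₁ − M₂) preserves the degree of polynomials in the grid variable λ_x = x², acting on the leading term with eigenvalue 1−n. -/
import Mathlib

open Polynomial

noncomputable def SKp : ℕ → Polynomial ℂ × Polynomial ℂ
  | 0 => (1, C 2 * X + C 2)
  | n+1 => ((X + 1) * (SKp n).1 - C (1/2) * (SKp n).2,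
            (X + 1) * (SKp n).2 - C 8 * X * (SKp n).1)

lemma SKp_eval (n : ℕ) (x : ℂ) :
    4*x*((SKp n).1.eval (x^2)) = -(x-1)^2*(x+1)^(2*n) + (x+1)^2*(x-1)^(2*n)
    ∧ (SKp n).2.eval (x^2) = (x-1)^2*(x+1)^(2*n) + (x+1)^2*(x-1)^(2*n) := by
  induction n with
  | zero => constructor <;> simp [SKp] <;> ring
  | succ n ih =>
    obtain ⟨h1, h2⟩ := ih
    have hp : 2 * (n+1) = 2*n + 2 := by ring
    constructor <;> simp only [SKp, eval_sub, eval_mul, eval_add, eval_X, eval_one, eval_C, hp, pow_add]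
    · linear_combination (x^2+1)*h1 - 2*x*h2
    · linear_combination (x^2+1)*h2 - 2*x*h1

lemma degXadd1 : ((X : Polynomial ℂ) + 1).degree ≤ 1 := by
  simpa using (degree_X_add_C (1:ℂ)).le

lemma SKp_deg (n : ℕ) :
    (SKp n).1.coeff n = 1 - n ∧ (SKp n).1.degree ≤ (n : WithBot ℕ)
    ∧ (SKp n).2.coeff (n+1) = 2 ∧ (SKp n).2.degree ≤ ((n+1 : ℕ) : WithBot ℕ) := by
  induction n with
  | zero =>
    refine ⟨by simp [SKp], by simp [SKp], ?_, ?_⟩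
    · simp [SKp, coeff_add, coeff_C_mul]
    · simp only [SKp]
      refine le_trans (degree_add_le _ _) (max_le ?_ ?_)
      · exact degree_C_mul_X_le _
      · exact le_trans degree_C_le (by norm_num)
  | succ n ih =>
    obtain ⟨hc1, hd1, hc2, hd2⟩ := ih
    have hS0 : (SKp n).1.coeff (n+1) = 0 :=
      coeff_eq_zero_of_degree_lt (lt_of_le_of_lt hd1 (by exact_mod_cast Nat.lt_succ_self n))
    have hK0 : (SKp n).2.coeff (n+2) = 0 :=
      coeff_eq_zero_of_degree_lt (lt_of_le_of_lt hd2 (by exact_mod_cast Nat.lt_succ_self (n+1)))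
    have hXS : ∀ p : Polynomial ℂ, ∀ m : ℕ, ((X + 1) * p).coeff (m+1) = p.coeff m + p.coeff (m+1) := by
      intro p m
      rw [add_mul, one_mul, coeff_add, coeff_X_mul]
    refine ⟨?_, ?_, ?_, ?_⟩
    · simp only [SKp, coeff_sub, hXS, coeff_C_mul, hc1, hS0, hc2]
      push_cast; ring
    · simp only [SKp]
      refine le_trans (degree_sub_le _ _) (max_le ?_ ?_)
      · refine le_trans (degree_mul_le _ _) ?_
        have h : ((n+1 : ℕ) : WithBot ℕ) = 1 + (n : WithBot ℕ) := by
          push_cast; rw [add_comm]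
        rw [h]
        exact add_le_add degXadd1 hd1
      · refine le_trans (degree_mul_le _ _) ?_
        refine le_trans (add_le_add degree_C_le hd2) ?_
        simp
    · have h8 : (C (8:ℂ) * X * (SKp n).1).coeff (n+2) = 8 * (SKp n).1.coeff (n+1) := by
        rw [mul_assoc, coeff_C_mul, coeff_X_mul]
      simp only [SKp, coeff_sub, hXS, h8, hc2, hK0, hS0]
      ring
    · simp only [SKp]
      refine le_trans (degree_sub_le _ _) (max_le ?_ ?_)
      · refine le_trans (degree_mul_le _ _) ?_
        have h : ((n+1+1 : ℕ) : WithBot ℕ) = 1 + ((n+1 : ℕ) : WithBot ℕ) := by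
          push_cast; ring
        rw [h]
        exact add_le_add degXadd1 hd2
      · refine le_trans (degree_mul_le _ _) ?_
        refine le_trans (add_le_add (le_trans (degree_mul_le _ _) (add_le_add degree_C_le degree_X_le)) hd1) ?_
        have h0 : (0 : WithBot ℕ) + 1 + (n : WithBot ℕ) = ((1 + n : ℕ) : WithBot ℕ) := by
          push_cast; ring
        rw [h0]
        exact_mod_cast (by omega : 1 + n ≤ n + 1 + 1)

/-- On the quadratic grid λ_x = x², the operator ½(M₁ − M₂),
(½(M₁−M₂)f)(x) = (−(x−1)²f(x+1) + (x+1)²f(x−1))/(4x), preserves the degree of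
polynomials in λ_x: on f(x) = x^{2n} it gives (1−n)·x^{2n} plus a polynomial of
degree at most n−1 in x². -/
theorem stmt3 (n : ℕ) (f : ℂ → ℂ) (hf : ∀ x : ℂ, f x = x ^ (2 * n)) :
    ∃ r : Polynomial ℂ, r.degree < (n : WithBot ℕ) ∧
      ∀ x : ℂ, x ≠ 0 →
        (-(x - 1) ^ 2 * f (x + 1) + (x + 1) ^ 2 * f (x - 1)) / (4 * x)
          = ((1 : ℂ) - (n : ℂ)) * x ^ (2 * n) + r.eval (x ^ 2) := by
  obtain ⟨hc, hd, -, -⟩ := SKp_deg n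
  refine ⟨(SKp n).1 - C ((1:ℂ) - n) * X ^ n, ?_, ?_⟩
  · rw [degree_lt_iff_coeff_zero]
    intro m hm
    rw [coeff_sub, coeff_C_mul, coeff_X_pow]
    rcases eq_or_lt_of_le (by exact_mod_cast hm : n ≤ m) with h | h
    · subst h; simp [hc]
    · rw [coeff_eq_zero_of_degree_lt (lt_of_le_of_lt hd (by exact_mod_cast h))]
      simp [Nat.ne_of_gt h]
  · intro x hx
    have he := (SKp_eval n x).1
    rw [hf, hf, div_eq_iff (by simp [hx] : (4:ℂ) * x ≠ 0),
        eval_sub, eval_mul, eval_C, eval_pow, eval_X]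
    linear_combination -he
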